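/- Two embeddings ρ₁, ρ₂ : V → ℝ² of a finite connected graph G that assign the same tuple (edge lengths and oriented angles at each middle vertex) to every two-hop path, and that are edge-length-preservingly related (dist(ρ₁(u), ρ₁(v)) = dist(ρ₂(u), ρ₂(v)) for each edge uv), differ by an orientation-preserving rigid motion, provided G contains at least one two-hop path and every vertex is reachable by chaining two-hop extensions from that path's first edge. -/

import Mathlib

/-- Vertices reachable by chaining two-hop extensions from a base edge `{u, w}`. -/
inductive TwoHopReach {V : Type*} (G : SimpleGraph V) (u w : V) : V → Prop
  | base_u : TwoHopReach G u w u
  | base_w : TwoHopReach G u w w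
  | extend (vi vj vk : V) : TwoHopReach G u w vi → TwoHopReach G u w vj →
      G.Adj vi vj → G.Adj vj vk → TwoHopReach G u w vk

/-- Two embeddings of a finite connected graph into the plane (modeled as `ℂ`) that
assign the same two-hop tuple (edge lengths and oriented angle at the middle vertex)
to every two-hop path and preserve edge lengths differ by an orientation-preserving
rigid motion `z ↦ R z + t` (`|R| = 1`), provided `G` contains a two-hop path
`(u, w, z)` and every vertex is reachable by chaining two-hop extensions from the
edge `{u, w}`. -/
theorem equal_tuples_implies_rigid_motion
    (V : Type*) [Fintype V]
    (G : SimpleGraph V) (hconn : G.Connected)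
    (ρ₁ ρ₂ : V → ℂ)
    (hinj : ∀ x y : V, G.Adj x y → ρ₁ x ≠ ρ₁ y)
    (hlen : ∀ x y : V, G.Adj x y → dist (ρ₁ x) (ρ₁ y) = dist (ρ₂ x) (ρ₂ y))
    (htuple : ∀ vi vj vk : V, G.Adj vi vj → G.Adj vj vk →
      dist (ρ₁ vi) (ρ₁ vj) = dist (ρ₂ vi) (ρ₂ vj) ∧
      dist (ρ₁ vj) (ρ₁ vk) = dist (ρ₂ vj) (ρ₂ vk) ∧
      Complex.arg ((ρ₁ vk - ρ₁ vj) / (ρ₁ vi - ρ₁ vj)) =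
        Complex.arg ((ρ₂ vk - ρ₂ vj) / (ρ₂ vi - ρ₂ vj)))
    (u w z : V) (huw : G.Adj u w) (hwz : G.Adj w z)
    (hreach : ∀ v : V, TwoHopReach G u w v) :
    ∃ R t : ℂ, ‖R‖ = 1 ∧ ∀ v : V, ρ₂ v = R * ρ₁ v + t := by

  have hd : ρ₁ w - ρ₁ u ≠ 0 := sub_ne_zero.mpr (hinj w u huw.symm)
  set R : ℂ := (ρ₂ w - ρ₂ u) / (ρ₁ w - ρ₁ u) with hR
  set t : ℂ := ρ₂ u - R * ρ₁ u with ht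
  refine ⟨R, t, ?_, ?_⟩
  · have h1 : dist (ρ₁ u) (ρ₁ w) = dist (ρ₂ u) (ρ₂ w) := hlen u w huw
    have h2 : dist (ρ₁ u) (ρ₁ w) ≠ 0 := by
      simpa [dist_eq_zero] using (hinj u w huw)
    rw [hR, norm_div]
    simp only [Complex.dist_eq] at h1 h2
    rw [show ‖ρ₂ w - ρ₂ u‖ = ‖ρ₂ u - ρ₂ w‖ by
      exact norm_sub_rev _ _,
      show ‖ρ₁ w - ρ₁ u‖ = ‖ρ₁ u - ρ₁ w‖ by
      exact norm_sub_rev _ _, ← h1]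
    exact div_self h2
  · intro v
    induction hreach v with
    | base_u => rw [ht]; ring
    | base_w =>
        have : R * (ρ₁ w - ρ₁ u) = ρ₂ w - ρ₂ u := div_mul_cancel₀ _ hd
        rw [ht]; linear_combination -this
    | extend vi vj vk _ _ hij hjk ihi ihj =>
        have hdij : ρ₁ vi - ρ₁ vj ≠ 0 := sub_ne_zero.mpr (hinj vi vj hij)
        obtain ⟨e1, e2, e3⟩ := htuple vi vj vk hij hjk
        have hdij2 : ρ₂ vi - ρ₂ vj ≠ 0 := by
          have : dist (ρ₂ vi) (ρ₂ vj) ≠ 0 := by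
            rw [← e1]; simpa [dist_eq_zero] using (hinj vi vj hij)
          rw [Complex.dist_eq] at this
          intro h; rw [h] at this; simp at this
        have habs : ‖(ρ₁ vk - ρ₁ vj) / (ρ₁ vi - ρ₁ vj)‖ =
            ‖(ρ₂ vk - ρ₂ vj) / (ρ₂ vi - ρ₂ vj)‖ := by
          rw [norm_div, norm_div]
          simp only [Complex.dist_eq] at e1 e2
          rw [show ‖ρ₁ vk - ρ₁ vj‖ = ‖ρ₁ vj - ρ₁ vk‖ by
              exact norm_sub_rev _ _,
            show ‖ρ₂ vk - ρ₂ vj‖ = ‖ρ₂ vj - ρ₂ vk‖ by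
              exact norm_sub_rev _ _, e1, e2]
        have hq : (ρ₁ vk - ρ₁ vj) / (ρ₁ vi - ρ₁ vj) =
            (ρ₂ vk - ρ₂ vj) / (ρ₂ vi - ρ₂ vj) :=
          Complex.ext_norm_arg habs e3
        have hkey : ρ₂ vk - ρ₂ vj =
            (ρ₁ vk - ρ₁ vj) / (ρ₁ vi - ρ₁ vj) * (ρ₂ vi - ρ₂ vj) := by
          rw [hq, div_mul_cancel₀ _ hdij2]
        have hsub : ρ₂ vi - ρ₂ vj = R * (ρ₁ vi - ρ₁ vj) := by
          rw [ihi, ihj]; ring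
        have hcan : (ρ₁ vk - ρ₁ vj) / (ρ₁ vi - ρ₁ vj) * (ρ₁ vi - ρ₁ vj)
            = ρ₁ vk - ρ₁ vj := div_mul_cancel₀ _ hdij
        rw [hsub] at hkey
        have : ρ₂ vk = ρ₂ vj + (ρ₁ vk - ρ₁ vj) / (ρ₁ vi - ρ₁ vj) * (ρ₁ vi - ρ₁ vj) * R := by
          linear_combination hkey
        rw [hcan] at this
        rw [this, ihj]; ring
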